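/- Let h ∈ C[x,y,z] be a homogeneous polynomial of degree e satisfying x·h_x − z·h_z = 0. If e = 2e₁ is even, then there exists a homogeneous polynomial h₁ ∈ C[u,v] of degree e₁ such that h = h₁(xz, y^2); if e = 2e₁ + 1 is odd, then there exists a homogeneous polynomial h₁ ∈ C[u,v] of degree e₁ such that h = y·h₁(xz, y^2). -/

import Mathlib

open MvPolynomial

lemma aux_coeff (i : Fin 3) (p : MvPolynomial (Fin 3) ℂ) (m : Fin 3 →₀ ℕ) :
    coeff m (X i * pderiv i p) = (m i : ℂ) * coeff m p := by
  induction p using MvPolynomial.induction_on' with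
  | add p q hp hq => simp [mul_add, hp, hq, mul_add]
  | monomial s a =>
    rw [pderiv_monomial]
    by_cases hsi : s i = 0
    · simp only [hsi, Nat.cast_zero, mul_zero, map_zero, coeff_zero, mul_zero, coeff_monomial]
      split_ifs with hsm
      · subst hsm; simp [hsi]
      · simp
    · have h1 : Finsupp.single i 1 + (s - Finsupp.single i 1) = s := by
        ext j
        by_cases hj : j = i
        · subst hj; simp [Finsupp.single_apply]; omega
        · simp [Finsupp.single_apply, hj, Ne.symm hj]
      rw [X, monomial_mul, h1, one_mul]
      simp [coeff_monomial]
      split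
      · next hms => subst hms; ring
      · simp

lemma mono_eq (a b c2 : ℕ) (c : ℂ) (m : Fin 3 →₀ ℕ) (h0 : m 0 = a) (h1 : m 1 = b)
    (h2 : m 2 = c2) :
    (monomial m c : MvPolynomial (Fin 3) ℂ) = C c * X 0 ^ a * X 1 ^ b * X 2 ^ c2 := by
  have hm : m = (Finsupp.single 0 a + Finsupp.single 1 b + Finsupp.single 2 c2 : Fin 3 →₀ ℕ) := by
    ext j
    fin_cases j <;> simp [Finsupp.single_apply, ← h0, ← h1, ← h2]
  rw [X_pow_eq_monomial, X_pow_eq_monomial, X_pow_eq_monomial, C_mul_monomial, monomial_mul,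
    monomial_mul, mul_one, mul_one, mul_one, hm]

theorem stmt7 (h : MvPolynomial (Fin 3) ℂ) (e : ℕ) (hh : h.IsHomogeneous e)
    (heq : X 0 * pderiv 0 h - X 2 * pderiv 2 h = 0) :
    (∀ e₁ : ℕ, e = 2 * e₁ →
      ∃ h₁ : MvPolynomial (Fin 2) ℂ, h₁.IsHomogeneous e₁ ∧
        h = aeval ![X 0 * X 2, X 1 ^ 2] h₁) ∧
    (∀ e₁ : ℕ, e = 2 * e₁ + 1 →
      ∃ h₁ : MvPolynomial (Fin 2) ℂ, h₁.IsHomogeneous e₁ ∧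
        h = X 1 * aeval ![X 0 * X 2, X 1 ^ 2] h₁) := by
  have key : ∀ m ∈ h.support, m 0 = m 2 := by
    intro m hm
    have hc : coeff m h ≠ 0 := mem_support_iff.mp hm
    have h0 := congrArg (coeff m) heq
    rw [coeff_sub, aux_coeff, aux_coeff, coeff_zero, sub_eq_zero] at h0
    exact_mod_cast mul_right_cancel₀ hc h0
  have deg : ∀ m ∈ h.support, m 0 + m 1 + m 2 = e := by
    intro m hm
    have hc : coeff m h ≠ 0 := mem_support_iff.mp hm
    have hd := hh hc
    rw [Finsupp.weight_apply, Finsupp.sum_fintype] at hd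
    · simpa [Fin.sum_univ_three] using hd
    · intro i; simp
  constructor
  · intro e₁ he
    refine ⟨∑ m ∈ h.support, C (coeff m h) * X 0 ^ (m 0) * X 1 ^ (m 1 / 2), ?_, ?_⟩
    · apply IsHomogeneous.sum
      intro m hm
      have h02 := key m hm
      have hd := deg m hm
      have he1 : e₁ = 0 + 1 * m 0 + 1 * (m 1 / 2) := by omega
      rw [he1]
      exact ((isHomogeneous_C _ _).mul ((isHomogeneous_X _ _).pow _)).mul
        ((isHomogeneous_X _ _).pow _)
    · rw [map_sum]
      conv_lhs => rw [h.as_sum]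
      apply Finset.sum_congr rfl
      intro m hm
      have h02 := key m hm
      have hd := deg m hm
      have hb : m 1 = 2 * (m 1 / 2) := by omega
      rw [map_mul, map_mul, map_pow, map_pow, aeval_X, aeval_X, aeval_C]
      simp only [Matrix.cons_val_zero, Matrix.cons_val_one, Matrix.head_cons, algebraMap_eq]
      rw [mono_eq (m 0) (2 * (m 1 / 2)) (m 0) _ m rfl hb h02.symm]
      ring
  · intro e₁ he
    refine ⟨∑ m ∈ h.support, C (coeff m h) * X 0 ^ (m 0) * X 1 ^ (m 1 / 2), ?_, ?_⟩
    · apply IsHomogeneous.sum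
      intro m hm
      have h02 := key m hm
      have hd := deg m hm
      have he1 : e₁ = 0 + 1 * m 0 + 1 * (m 1 / 2) := by omega
      rw [he1]
      exact ((isHomogeneous_C _ _).mul ((isHomogeneous_X _ _).pow _)).mul
        ((isHomogeneous_X _ _).pow _)
    · rw [map_sum, Finset.mul_sum]
      conv_lhs => rw [h.as_sum]
      apply Finset.sum_congr rfl
      intro m hm
      have h02 := key m hm
      have hd := deg m hm
      have hb : m 1 = 2 * (m 1 / 2) + 1 := by omega
      rw [map_mul, map_mul, map_pow, map_pow, aeval_X, aeval_X, aeval_C]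
      simp only [Matrix.cons_val_zero, Matrix.cons_val_one, Matrix.head_cons, algebraMap_eq]
      rw [mono_eq (m 0) (2 * (m 1 / 2) + 1) (m 0) _ m rfl hb h02.symm]
      ring
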